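/- Let $\{P_\theta\}_{\theta \in \Theta}$ be a family of probability measures on $(\mathfrak{X},\mathcal{A})$. For any $G = \sum_{i=1}^{k_0} p_i \delta_{\theta_i}$ and $G' = \sum_{i=1}^{k_0} p'_i \delta_{\theta'_i}$ in $\mathcal{E}_{k_0}(\Theta)$ and any $N \geq 1$, the Hellinger distance between the mixtures of $N$-product distributions satisfies $h(P_{G,N}, P_{G',N}) \leq \min_{\tau \in S_{k_0}} \left( \sqrt{N} \max_{1 \leq i \leq k_0} h(P_{\theta_i}, P_{\theta'_{\tau(i)}}) + \sqrt{\frac{1}{2}\sum_{i=1}^{k_0} |p_i - p'_{\tau(i)}|} \right)$. -/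

import Mathlib

open MeasureTheory
open scoped BigOperators ENNReal

/-- Hellinger distance between two measures (densities taken w.r.t. `P + Q`). -/
noncomputable def hellD {Y : Type*} [MeasurableSpace Y] (P Q : Measure Y) : ℝ :=
  Real.sqrt ((1 / 2) * ∫ x, (Real.sqrt ((P.rnDeriv (P + Q) x).toReal)
      - Real.sqrt ((Q.rnDeriv (P + Q) x).toReal)) ^ 2 ∂(P + Q))

noncomputable section
namespace HellAux
variable {Y : Type*} [MeasurableSpace Y]


variable {Y : Type*} [MeasurableSpace Y]

/-- square root of the density of `P` w.r.t. `μ`. -/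
noncomputable def sd (P μ : Measure Y) (x : Y) : ℝ := Real.sqrt ((P.rnDeriv μ x).toReal)

lemma measurable_sd (P μ : Measure Y) : Measurable (sd P μ) :=
  (Measure.measurable_rnDeriv P μ).ennreal_toReal.sqrt

lemma sd_nonneg (P μ : Measure Y) (x : Y) : 0 ≤ sd P μ x := Real.sqrt_nonneg _

lemma sq_sd (P μ : Measure Y) (x : Y) : sd P μ x ^ 2 = (P.rnDeriv μ x).toReal :=
  Real.sq_sqrt ENNReal.toReal_nonneg

lemma integrable_sq_sd (P μ : Measure Y) [IsFiniteMeasure P] :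
    Integrable (fun x => sd P μ x ^ 2) μ := by
  simp only [sq_sd]; exact Measure.integrable_toReal_rnDeriv

lemma memℒp_sd (P μ : Measure Y) [IsFiniteMeasure P] : MemLp (sd P μ) 2 μ :=
  (memLp_two_iff_integrable_sq (measurable_sd P μ).aestronglyMeasurable).2 (integrable_sq_sd P μ)

lemma integrable_mul_sd (P Q μ : Measure Y) [IsFiniteMeasure P] [IsFiniteMeasure Q] :
    Integrable (fun x => sd P μ x * sd Q μ x) μ := by
  refine Integrable.mono' (((integrable_sq_sd P μ).add (integrable_sq_sd Q μ)).const_mul (1/2))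
    ((measurable_sd P μ).mul (measurable_sd Q μ)).aestronglyMeasurable
    (Filter.Eventually.of_forall fun x => ?_)
  have h1 := sd_nonneg P μ x; have h2 := sd_nonneg Q μ x
  rw [Real.norm_eq_abs, abs_of_nonneg (mul_nonneg h1 h2)]
  simp only [Pi.add_apply]
  nlinarith [sq_nonneg (sd P μ x - sd Q μ x)]

lemma integrable_sub_sq_sd (P Q μ : Measure Y) [IsFiniteMeasure P] [IsFiniteMeasure Q] :
    Integrable (fun x => (sd P μ x - sd Q μ x) ^ 2) μ := by
  have h : (fun x => (sd P μ x - sd Q μ x) ^ 2)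
      = fun x => sd P μ x ^ 2 - 2 * (sd P μ x * sd Q μ x) + sd Q μ x ^ 2 := by
    funext x; ring
  rw [h]
  exact ((integrable_sq_sd P μ).sub ((integrable_mul_sd P Q μ).const_mul 2)).add
    (integrable_sq_sd Q μ)

lemma integral_sq_sd (P μ : Measure Y) [SigmaFinite P] [SigmaFinite μ] (h : P ≪ μ) :
    ∫ x, sd P μ x ^ 2 ∂μ = (P Set.univ).toReal := by
  simp only [sq_sd]; exact Measure.integral_toReal_rnDeriv h

lemma integral_sub_sq_eq (P Q μ : Measure Y) [IsFiniteMeasure P] [IsFiniteMeasure Q]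
    [SigmaFinite μ] (hP : P ≪ μ) (hQ : Q ≪ μ) :
    ∫ x, (sd P (P + Q) x - sd Q (P + Q) x) ^ 2 ∂(P + Q)
      = ∫ x, (sd P μ x - sd Q μ x) ^ 2 ∂μ := by
  set ν := P + Q with hν
  have hPν : P ≪ ν := Measure.absolutelyContinuous_of_le (Measure.le_add_right le_rfl)
  have hQν : Q ≪ ν := Measure.absolutelyContinuous_of_le (Measure.le_add_left le_rfl)
  have hνμ : ν ≪ μ := hP.add_left hQ
  rw [← MeasureTheory.integral_rnDeriv_smul hνμ
    (f := fun x => (sd P ν x - sd Q ν x) ^ 2)]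
  refine integral_congr_ae ?_
  filter_upwards [Measure.rnDeriv_mul_rnDeriv hPν, Measure.rnDeriv_mul_rnDeriv hQν]
    with x h1 h2
  have e1 : sd P μ x = sd P ν x * Real.sqrt ((ν.rnDeriv μ x).toReal) := by
    rw [sd, ← h1, Pi.mul_apply, ENNReal.toReal_mul,
      Real.sqrt_mul ENNReal.toReal_nonneg]; rfl
  have e2 : sd Q μ x = sd Q ν x * Real.sqrt ((ν.rnDeriv μ x).toReal) := by
    rw [sd, ← h2, Pi.mul_apply, ENNReal.toReal_mul,
      Real.sqrt_mul ENNReal.toReal_nonneg]; rfl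
  have hw : Real.sqrt ((ν.rnDeriv μ x).toReal) ^ 2 = (ν.rnDeriv μ x).toReal :=
    Real.sq_sqrt ENNReal.toReal_nonneg
  rw [smul_eq_mul, e1, e2, ← sub_mul, mul_pow, hw]; ring

lemma hellD_eq_sqrt (P Q μ : Measure Y) [IsFiniteMeasure P] [IsFiniteMeasure Q]
    [SigmaFinite μ] (hP : P ≪ μ) (hQ : Q ≪ μ) :
    hellD P Q = Real.sqrt ((1 / 2) * ∫ x, (sd P μ x - sd Q μ x) ^ 2 ∂μ) := by
  rw [hellD, show (∫ x, (Real.sqrt ((P.rnDeriv (P + Q) x).toReal)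
      - Real.sqrt ((Q.rnDeriv (P + Q) x).toReal)) ^ 2 ∂(P + Q))
    = ∫ x, (sd P (P + Q) x - sd Q (P + Q) x) ^ 2 ∂(P + Q) from rfl,
    integral_sub_sq_eq P Q μ hP hQ]


lemma norm_toLp_sub {u v : Y → ℝ} (hu : MemLp u 2 μ) (hv : MemLp v 2 μ) :
    ‖hu.toLp u - hv.toLp v‖ = Real.sqrt (∫ x, (u x - v x) ^ 2 ∂μ) := by
  set F := hu.toLp u - hv.toLp v with hF
  have hFae : (F : Y → ℝ) =ᵐ[μ] fun x => u x - v x := by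
    filter_upwards [Lp.coeFn_sub (hu.toLp u) (hv.toLp v), hu.coeFn_toLp, hv.coeFn_toLp]
      with x h1 h2 h3
    show (↑↑(MemLp.toLp u hu - MemLp.toLp v hv) : Y → ℝ) x = u x - v x
    rw [h1]
    simp only [Pi.sub_apply, h2, h3]
  have h2 : ‖F‖ ^ 2 = ∫ x, (u x - v x) ^ 2 ∂μ := by
    rw [← real_inner_self_eq_norm_sq, L2.inner_def]
    refine integral_congr_ae ?_
    filter_upwards [hFae] with x hx
    rw [hx]
    simp [RCLike.inner_apply, sq]
  rw [← h2, Real.sqrt_sq (norm_nonneg F)]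

lemma sqrt_integral_triangle {u v w : Y → ℝ} (hu : MemLp u 2 μ) (hv : MemLp v 2 μ)
    (hw : MemLp w 2 μ) :
    Real.sqrt (∫ x, (u x - w x) ^ 2 ∂μ)
      ≤ Real.sqrt (∫ x, (u x - v x) ^ 2 ∂μ) + Real.sqrt (∫ x, (v x - w x) ^ 2 ∂μ) := by
  rw [← norm_toLp_sub hu hw, ← norm_toLp_sub hu hv, ← norm_toLp_sub hv hw]
  exact norm_sub_le_norm_sub_add_norm_sub _ _ _


lemma sqrt_fprod {ι : Type*} (s : Finset ι) (f : ι → ℝ) (hf : ∀ i, 0 ≤ f i) :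
    Real.sqrt (∏ i ∈ s, f i) = ∏ i ∈ s, Real.sqrt (f i) := by
  induction s using Finset.cons_induction with
  | empty => simp
  | cons a s ha ih => rw [Finset.prod_cons, Finset.prod_cons, Real.sqrt_mul (hf a), ih]

lemma lintegral_pi_prod {X : Type*} [MeasurableSpace X] :
    ∀ (n : ℕ) (μ : Fin n → Measure X), (∀ i, SigmaFinite (μ i)) →
    ∀ (f : Fin n → X → ℝ≥0∞), (∀ i, Measurable (f i)) →
    ∫⁻ x : Fin n → X, ∏ i, f i (x i) ∂(Measure.pi μ) = ∏ i, ∫⁻ y, f i y ∂(μ i) := by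
  intro n
  induction n with
  | zero =>
    intro μ _ f _
    simp [Measure.pi_univ]
  | succ n ih =>
    intro μ hμ f hf
    haveI := fun i => hμ i
    have hmp := (measurePreserving_piFinSuccAbove (fun i : Fin (n + 1) => μ i) 0)
    have hemb :=
      (MeasurableEquiv.piFinSuccAbove (fun _ : Fin (n + 1) => X) 0).measurableEmbedding
    have key := hmp.lintegral_comp_emb hemb
      (fun z : X × (Fin n → X) => f 0 z.1 * ∏ j : Fin n, f (Fin.succ j) (z.2 j))
    have hcomp : ∀ x : Fin (n + 1) → X,
        (f 0 ((MeasurableEquiv.piFinSuccAbove (fun _ : Fin (n + 1) => X) 0) x).1 *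
          ∏ j : Fin n, f (Fin.succ j)
            (((MeasurableEquiv.piFinSuccAbove (fun _ : Fin (n + 1) => X) 0) x).2 j))
        = ∏ i, f i (x i) := by
      intro x
      rw [Fin.prod_univ_succ]
      simp [MeasurableEquiv.piFinSuccAbove, Fin.zero_succAbove, Fin.tail]
    simp only [hcomp, Fin.zero_succAbove] at key
    have hg : AEMeasurable (fun y : Fin n → X => ∏ j : Fin n, f (Fin.succ j) (y j))
        (Measure.pi fun j => μ (Fin.succ j)) :=
      (Finset.measurable_prod Finset.univ fun j _ =>
        (hf (Fin.succ j)).comp (measurable_pi_apply j)).aemeasurable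
    have key2 : (∫⁻ b : X × (Fin n → X), f 0 b.1 * ∏ j : Fin n, f (Fin.succ j) (b.2 j)
          ∂((μ 0).prod (Measure.pi fun j => μ (Fin.succ j))))
        = (∫⁻ y, f 0 y ∂μ 0) * ∏ j : Fin n, ∫⁻ y, f (Fin.succ j) y ∂μ (Fin.succ j) := by
      rw [lintegral_prod_mul (hf 0).aemeasurable hg,
        ih (fun j => μ (Fin.succ j)) (fun j => hμ _) (fun j => f (Fin.succ j)) (fun j => hf _)]
    exact (key.trans key2).trans (Fin.prod_univ_succ fun i => ∫⁻ y, f i y ∂μ i).symm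






lemma pi_withDensity {X : Type*} [MeasurableSpace X] {n : ℕ}
    (μ : Fin n → Measure X) [∀ i, SigmaFinite (μ i)]
    (ν : Fin n → Measure X) [∀ i, SigmaFinite (ν i)]
    (f : Fin n → X → ℝ≥0∞) (hf : ∀ i, Measurable (f i))
    (hν : ∀ i, ν i = (μ i).withDensity (f i)) :
    Measure.pi ν = (Measure.pi μ).withDensity fun x => ∏ i, f i (x i) := by
  refine Measure.pi_eq fun s hs => ?_
  rw [withDensity_apply _ (MeasurableSet.univ_pi hs), ← lintegral_indicator
    (MeasurableSet.univ_pi hs)]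
  have hind : ∀ x : Fin n → X,
      (Set.univ.pi s).indicator (fun x => ∏ i, f i (x i)) x
        = ∏ i, (s i).indicator (f i) (x i) := by
    intro x
    by_cases hx : x ∈ Set.univ.pi s
    · rw [Set.indicator_of_mem hx]
      refine Finset.prod_congr rfl fun i _ => ?_
      rw [Set.indicator_of_mem (hx i (Set.mem_univ i))]
    · rw [Set.indicator_of_notMem hx]
      rw [Set.mem_univ_pi] at hx
      push_neg at hx
      obtain ⟨i, hi⟩ := hx
      exact (Finset.prod_eq_zero (Finset.mem_univ i)
        (by rw [Set.indicator_of_notMem hi])).symm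
  simp only [hind]
  rw [lintegral_pi_prod n μ (fun i => inferInstance) (fun i => (s i).indicator (f i))
    (fun i => (hf i).indicator (hs i))]
  refine Finset.prod_congr rfl fun i _ => ?_
  rw [lintegral_indicator (hs i), hν i, withDensity_apply _ (hs i)]



-- main tensorization lemma
lemma hellD_pi_le {X : Type*} [MeasurableSpace X] (N : ℕ) (P Q : Measure X)
    [IsProbabilityMeasure P] [IsProbabilityMeasure Q] :
    hellD (Measure.pi fun _ : Fin N => P) (Measure.pi fun _ : Fin N => Q)
      ≤ Real.sqrt N * hellD P Q := by
  set μ := P + Q with hμdef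
  have hP : P ≪ μ := Measure.absolutelyContinuous_of_le (Measure.le_add_right le_rfl)
  have hQ : Q ≪ μ := Measure.absolutelyContinuous_of_le (Measure.le_add_left le_rfl)
  set u := sd P μ with hu
  set v := sd Q μ with hv
  set ρ := ∫ x, u x * v x ∂μ with hρ
  have hu2 : ∫ x, u x ^ 2 ∂μ = 1 := by
    rw [hu, integral_sq_sd P μ hP]; simp
  have hv2 : ∫ x, v x ^ 2 ∂μ = 1 := by
    rw [hv, integral_sq_sd Q μ hQ]; simp
  have hρ0 : 0 ≤ ρ := integral_nonneg fun x => mul_nonneg (sd_nonneg _ _ _) (sd_nonneg _ _ _)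
  have hρ1 : ρ ≤ 1 := by
    have hmono : ∫ x, u x * v x ∂μ
        ≤ ∫ x, (1/2) * (u x ^ 2 + v x ^ 2) ∂μ := by
      refine integral_mono (integrable_mul_sd P Q μ)
        (((integrable_sq_sd P μ).add (integrable_sq_sd Q μ)).const_mul (1/2)) fun x => ?_
      nlinarith [sq_nonneg (u x - v x)]
    rw [integral_const_mul, integral_add (integrable_sq_sd P μ) (integrable_sq_sd Q μ),
      hu2, hv2] at hmono
    linarith
  have hPQ : hellD P Q = Real.sqrt (1 - ρ) := by
    rw [hellD_eq_sqrt P Q μ hP hQ]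
    congr 1
    have hpt : (fun x => (sd P μ x - sd Q μ x) ^ 2)
        = fun x => (u x ^ 2 + v x ^ 2) - 2 * (u x * v x) := by
      funext x; rw [hu, hv]; ring
    have I3 : ∫ x, (u x ^ 2 + v x ^ 2) - 2 * (u x * v x) ∂μ
        = (∫ x, (u x ^ 2 + v x ^ 2) ∂μ) - ∫ x, 2 * (u x * v x) ∂μ :=
      integral_sub ((integrable_sq_sd P μ).add (integrable_sq_sd Q μ))
        ((integrable_mul_sd P Q μ).const_mul 2)
    have I4 : ∫ x, (u x ^ 2 + v x ^ 2) ∂μ = (∫ x, u x ^ 2 ∂μ) + ∫ x, v x ^ 2 ∂μ :=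
      integral_add (integrable_sq_sd P μ) (integrable_sq_sd Q μ)
    have I5 : ∫ x, 2 * (u x * v x) ∂μ = 2 * ρ := by rw [integral_const_mul]
    rw [hpt, I3, I4, I5, hu2, hv2]
    ring
  -- product part
  set f := P.rnDeriv μ with hf
  set g := Q.rnDeriv μ with hg
  have hfm : Measurable f := Measure.measurable_rnDeriv P μ
  have hgm : Measurable g := Measure.measurable_rnDeriv Q μ
  set PN := Measure.pi (fun _ : Fin N => P) with hPN
  set QN := Measure.pi (fun _ : Fin N => Q) with hQN
  set μN := Measure.pi (fun _ : Fin N => μ) with hμN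
  have hμNfin : IsFiniteMeasure μN := by
    constructor
    rw [hμN, Measure.pi_univ]
    exact ENNReal.prod_lt_top fun i _ => measure_lt_top μ _
  have hPNd : PN = μN.withDensity fun x => ∏ i, f (x i) :=
    pi_withDensity (fun _ => μ) (fun _ => P) (fun _ => f) (fun _ => hfm)
      (fun _ => (Measure.withDensity_rnDeriv_eq P μ hP).symm)
  have hQNd : QN = μN.withDensity fun x => ∏ i, g (x i) :=
    pi_withDensity (fun _ => μ) (fun _ => Q) (fun _ => g) (fun _ => hgm)
      (fun _ => (Measure.withDensity_rnDeriv_eq Q μ hQ).symm)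
  have hFm : Measurable fun x : Fin N → X => ∏ i, f (x i) :=
    Finset.measurable_prod Finset.univ fun i _ => hfm.comp (measurable_pi_apply i)
  have hGm : Measurable fun x : Fin N → X => ∏ i, g (x i) :=
    Finset.measurable_prod Finset.univ fun i _ => hgm.comp (measurable_pi_apply i)
  have hACP : PN ≪ μN := hPNd ▸ withDensity_absolutelyContinuous μN _
  have hACQ : QN ≪ μN := hQNd ▸ withDensity_absolutelyContinuous μN _
  have hsdP : sd PN μN =ᵐ[μN] fun x => ∏ i, u (x i) := by
    have := hPNd ▸ Measure.rnDeriv_withDensity μN hFm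
    filter_upwards [this] with x hx
    rw [sd, hx, ENNReal.toReal_prod, sqrt_fprod _ _ (fun i => ENNReal.toReal_nonneg)]
    rfl
  have hsdQ : sd QN μN =ᵐ[μN] fun x => ∏ i, v (x i) := by
    have := hQNd ▸ Measure.rnDeriv_withDensity μN hGm
    filter_upwards [this] with x hx
    rw [sd, hx, ENNReal.toReal_prod, sqrt_fprod _ _ (fun i => ENNReal.toReal_nonneg)]
    rfl
  -- compute the integral over the product space
  letI : MeasureSpace X := ⟨μ⟩
  haveI : SigmaFinite (volume : Measure X) := (inferInstance : SigmaFinite μ)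
  have hvolpi : (volume : Measure (Fin N → X)) = μN := by
    rw [MeasureTheory.volume_pi, hμN]; rfl
  have hIA2 : ∫ x : Fin N → X, ∏ i, u (x i) ^ 2 ∂μN = 1 := by
    rw [← hvolpi]
    rw [MeasureTheory.integral_fintype_prod_volume_eq_pow (ι := Fin N) (fun y => u y ^ 2)]
    rw [show (∫ y, u y ^ 2 ∂(volume : Measure X)) = 1 from hu2]
    simp
  have hIB2 : ∫ x : Fin N → X, ∏ i, v (x i) ^ 2 ∂μN = 1 := by
    rw [← hvolpi, MeasureTheory.integral_fintype_prod_volume_eq_pow (ι := Fin N) (fun y => v y ^ 2),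
      show (∫ y, v y ^ 2 ∂(volume : Measure X)) = 1 from hv2]
    simp
  have hIAB : ∫ x : Fin N → X, ∏ i, (u (x i) * v (x i)) ∂μN = ρ ^ N := by
    rw [← hvolpi, MeasureTheory.integral_fintype_prod_volume_eq_pow (ι := Fin N) (fun y => u y * v y),
      show (∫ y, u y * v y ∂(volume : Measure X)) = ρ from hρ.symm]
    simp
  have hintA2 : Integrable (fun x : Fin N → X => ∏ i, u (x i) ^ 2) μN := by
    rw [← hvolpi]
    exact Integrable.fintype_prod (f := fun _ : Fin N => fun y => u y ^ 2)
      (fun i => integrable_sq_sd P μ)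
  have hintB2 : Integrable (fun x : Fin N → X => ∏ i, v (x i) ^ 2) μN := by
    rw [← hvolpi]
    exact Integrable.fintype_prod (f := fun _ : Fin N => fun y => v y ^ 2)
      (fun i => integrable_sq_sd Q μ)
  have hintAB : Integrable (fun x : Fin N → X => ∏ i, (u (x i) * v (x i))) μN := by
    rw [← hvolpi]
    exact Integrable.fintype_prod (f := fun _ : Fin N => fun y => u y * v y)
      (fun i => integrable_mul_sd P Q μ)
  have hmain : hellD PN QN = Real.sqrt (1 - ρ ^ N) := by
    rw [hellD_eq_sqrt PN QN μN hACP hACQ]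
    congr 1
    have hcongr : ∫ x, (sd PN μN x - sd QN μN x) ^ 2 ∂μN
        = ∫ x : Fin N → X, ((∏ i, u (x i) ^ 2) + (∏ i, v (x i) ^ 2)
            - 2 * ∏ i, (u (x i) * v (x i))) ∂μN := by
      refine integral_congr_ae ?_
      filter_upwards [hsdP, hsdQ] with x h1 h2
      rw [h1, h2]
      have e1 : ∏ i, u (x i) ^ 2 = (∏ i, u (x i)) ^ 2 := by rw [Finset.prod_pow]
      have e2 : ∏ i, v (x i) ^ 2 = (∏ i, v (x i)) ^ 2 := by rw [Finset.prod_pow]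
      have e3 : ∏ i, (u (x i) * v (x i)) = (∏ i, u (x i)) * ∏ i, v (x i) := by
        rw [Finset.prod_mul_distrib]
      rw [e1, e2, e3]; ring
    have I3 : ∫ x : Fin N → X, ((∏ i, u (x i) ^ 2) + (∏ i, v (x i) ^ 2))
          - 2 * ∏ i, (u (x i) * v (x i)) ∂μN
        = (∫ x : Fin N → X, ((∏ i, u (x i) ^ 2) + (∏ i, v (x i) ^ 2)) ∂μN)
          - ∫ x : Fin N → X, 2 * ∏ i, (u (x i) * v (x i)) ∂μN :=
      integral_sub (hintA2.add hintB2) (hintAB.const_mul 2)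
    have I4 : ∫ x : Fin N → X, ((∏ i, u (x i) ^ 2) + (∏ i, v (x i) ^ 2)) ∂μN
        = (∫ x : Fin N → X, ∏ i, u (x i) ^ 2 ∂μN)
          + ∫ x : Fin N → X, ∏ i, v (x i) ^ 2 ∂μN :=
      integral_add hintA2 hintB2
    have I5 : ∫ x : Fin N → X, 2 * ∏ i, (u (x i) * v (x i)) ∂μN
        = 2 * ∫ x : Fin N → X, ∏ i, (u (x i) * v (x i)) ∂μN := by rw [integral_const_mul]
    rw [hcongr, I3, I4, I5, hIA2, hIB2, hIAB]
    ring
  rw [hmain, hPQ]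
  have hbern : 1 - ρ ^ N ≤ N * (1 - ρ) := by
    have h := one_add_mul_le_pow (a := ρ - 1) (by linarith) N
    have : 1 + (N : ℝ) * (ρ - 1) ≤ ρ ^ N := by
      calc 1 + (N : ℝ) * (ρ - 1) ≤ (1 + (ρ - 1)) ^ N := h
      _ = ρ ^ N := by ring_nf
    nlinarith
  calc Real.sqrt (1 - ρ ^ N) ≤ Real.sqrt ((N : ℝ) * (1 - ρ)) := Real.sqrt_le_sqrt hbern
  _ = Real.sqrt N * Real.sqrt (1 - ρ) := Real.sqrt_mul (Nat.cast_nonneg N) _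


lemma key_convex {ι : Type*} [Fintype ι] (p a b : ι → ℝ) (hp : ∀ i, 0 ≤ p i)
    (ha : ∀ i, 0 ≤ a i) (hb : ∀ i, 0 ≤ b i) :
    (Real.sqrt (∑ i, p i * a i) - Real.sqrt (∑ i, p i * b i)) ^ 2
      ≤ ∑ i, p i * (Real.sqrt (a i) - Real.sqrt (b i)) ^ 2 := by
  have hSa : (0:ℝ) ≤ ∑ i, p i * a i :=
    Finset.sum_nonneg fun i _ => mul_nonneg (hp i) (ha i)
  have hSb : (0:ℝ) ≤ ∑ i, p i * b i :=
    Finset.sum_nonneg fun i _ => mul_nonneg (hp i) (hb i)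
  have hcs : ∑ i, p i * (Real.sqrt (a i) * Real.sqrt (b i))
      ≤ Real.sqrt (∑ i, p i * a i) * Real.sqrt (∑ i, p i * b i) := by
    have h := Real.sum_sqrt_mul_sqrt_le (Finset.univ : Finset ι)
      (f := fun i => p i * a i) (g := fun i => p i * b i)
      (fun i => mul_nonneg (hp i) (ha i)) (fun i => mul_nonneg (hp i) (hb i))
    refine le_trans (le_of_eq ?_) h
    refine Finset.sum_congr rfl fun i _ => ?_
    rw [Real.sqrt_mul (hp i), Real.sqrt_mul (hp i)]
    have : Real.sqrt (p i) * Real.sqrt (p i) = p i := Real.mul_self_sqrt (hp i)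
    linear_combination (-(Real.sqrt (a i) * Real.sqrt (b i))) * this
  have hexp : ∑ i, p i * (Real.sqrt (a i) - Real.sqrt (b i)) ^ 2
      = (∑ i, p i * a i) + (∑ i, p i * b i)
        - 2 * ∑ i, p i * (Real.sqrt (a i) * Real.sqrt (b i)) := by
    rw [← Finset.sum_add_distrib, Finset.mul_sum, ← Finset.sum_sub_distrib]
    refine Finset.sum_congr rfl fun i _ => ?_
    have e1 : Real.sqrt (a i) ^ 2 = a i := Real.sq_sqrt (ha i)
    have e2 : Real.sqrt (b i) ^ 2 = b i := Real.sq_sqrt (hb i)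
    linear_combination p i * e1 + p i * e2
  have eL : (Real.sqrt (∑ i, p i * a i) - Real.sqrt (∑ i, p i * b i)) ^ 2
      = (∑ i, p i * a i) + (∑ i, p i * b i)
        - 2 * (Real.sqrt (∑ i, p i * a i) * Real.sqrt (∑ i, p i * b i)) := by
    have e1 : Real.sqrt (∑ i, p i * a i) ^ 2 = ∑ i, p i * a i := Real.sq_sqrt hSa
    have e2 : Real.sqrt (∑ i, p i * b i) ^ 2 = ∑ i, p i * b i := Real.sq_sqrt hSb
    linear_combination e1 + e2
  rw [eL, hexp]
  linarith

lemma sqrt_sub_sq_le_abs {x y : ℝ} (hx : 0 ≤ x) (hy : 0 ≤ y) :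
    (Real.sqrt x - Real.sqrt y) ^ 2 ≤ |x - y| := by
  have hx' : Real.sqrt x ^ 2 = x := Real.sq_sqrt hx
  have hy' : Real.sqrt y ^ 2 = y := Real.sq_sqrt hy
  have hfac : x - y = (Real.sqrt x - Real.sqrt y) * (Real.sqrt x + Real.sqrt y) := by
    linear_combination hy' - hx'
  have h1 : |x - y| = |Real.sqrt x - Real.sqrt y| * (Real.sqrt x + Real.sqrt y) := by
    rw [hfac, abs_mul,
      abs_of_nonneg (add_nonneg (Real.sqrt_nonneg x) (Real.sqrt_nonneg y))]
  have h2 : |Real.sqrt x - Real.sqrt y| ≤ Real.sqrt x + Real.sqrt y := by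
    rw [abs_sub_le_iff]
    constructor <;> nlinarith [Real.sqrt_nonneg x, Real.sqrt_nonneg y]
  calc (Real.sqrt x - Real.sqrt y) ^ 2 = |Real.sqrt x - Real.sqrt y| ^ 2 := by rw [sq_abs]
  _ = |Real.sqrt x - Real.sqrt y| * |Real.sqrt x - Real.sqrt y| := sq _
  _ ≤ |Real.sqrt x - Real.sqrt y| * (Real.sqrt x + Real.sqrt y) :=
      mul_le_mul_of_nonneg_left h2 (abs_nonneg _)
  _ = |x - y| := h1.symm


-- finite sums of measures
lemma isFiniteMeasure_fsum {ι : Type*} (s : Finset ι) (ν : ι → Measure Y)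
    (h : ∀ i, IsFiniteMeasure (ν i)) : IsFiniteMeasure (∑ i ∈ s, ν i) := by
  constructor
  rw [Measure.finset_sum_apply]
  exact ENNReal.sum_lt_top.2 fun i _ => measure_lt_top _ _

lemma isFiniteMeasure_smul (c : ℝ≥0∞) (hc : c ≠ ∞) (ν : Measure Y) [IsFiniteMeasure ν] :
    IsFiniteMeasure (c • ν) := by
  constructor
  rw [Measure.smul_apply, smul_eq_mul]
  exact ENNReal.mul_lt_top hc.lt_top (measure_lt_top _ _)

lemma rnDeriv_fsum {ι : Type*} (s : Finset ι) (ν : ι → Measure Y)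
    (h : ∀ i, IsFiniteMeasure (ν i)) (μ : Measure Y) [SigmaFinite μ] :
    (∑ i ∈ s, ν i).rnDeriv μ =ᵐ[μ] fun x => ∑ i ∈ s, (ν i).rnDeriv μ x := by
  induction s using Finset.cons_induction with
  | empty =>
    simp only [Finset.sum_empty]
    filter_upwards [Measure.rnDeriv_zero μ] with x hx
    simpa using hx
  | cons a s ha ih =>
    haveI := fun i => h i
    haveI : IsFiniteMeasure (∑ i ∈ s, ν i) := isFiniteMeasure_fsum s ν h
    have h1 := Measure.rnDeriv_add' (ν a) (∑ i ∈ s, ν i) μ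
    rw [Finset.sum_cons]
    filter_upwards [h1, ih] with x hx1 hx2
    rw [hx1, Pi.add_apply, hx2, Finset.sum_cons]


lemma hellD_mix_le {k : ℕ} (Q Q' : Fin k → Measure Y)
    [hQP : ∀ i, IsProbabilityMeasure (Q i)] [hQ'P : ∀ i, IsProbabilityMeasure (Q' i)]
    (p p' : Fin k → ℝ) (hp : ∀ i, 0 ≤ p i) (hp' : ∀ i, 0 ≤ p' i) :
    hellD (∑ i, ENNReal.ofReal (p i) • Q i) (∑ i, ENNReal.ofReal (p' i) • Q' i)
      ≤ Real.sqrt (∑ i, p i * hellD (Q i) (Q' i) ^ 2)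
        + Real.sqrt ((1 / 2) * ∑ i, |p i - p' i|) := by
  have h12 : (0:ℝ) ≤ 1/2 := by norm_num
  set μ0 := ∑ i : Fin k, (Q i + Q' i) with hμ0
  haveI : IsFiniteMeasure μ0 :=
    isFiniteMeasure_fsum _ _ (fun i => inferInstance)
  have hQac : ∀ i, Q i ≪ μ0 := by
    intro i
    refine Measure.AbsolutelyContinuous.mk fun s hs h0 => ?_
    rw [hμ0, Measure.finset_sum_apply] at h0
    have h1 := (Finset.sum_eq_zero_iff.1 h0) i (Finset.mem_univ i)
    simp only [Measure.coe_add, Pi.add_apply, add_eq_zero] at h1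
    exact h1.1
  have hQ'ac : ∀ i, Q' i ≪ μ0 := by
    intro i
    refine Measure.AbsolutelyContinuous.mk fun s hs h0 => ?_
    rw [hμ0, Measure.finset_sum_apply] at h0
    have h1 := (Finset.sum_eq_zero_iff.1 h0) i (Finset.mem_univ i)
    simp only [Measure.coe_add, Pi.add_apply, add_eq_zero] at h1
    exact h1.2
  set A := ∑ i, ENNReal.ofReal (p i) • Q i with hA
  set B := ∑ i, ENNReal.ofReal (p i) • Q' i with hB
  set C := ∑ i, ENNReal.ofReal (p' i) • Q' i with hC
  haveI : IsFiniteMeasure A :=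
    isFiniteMeasure_fsum _ _ (fun i => isFiniteMeasure_smul _ ENNReal.ofReal_ne_top _)
  haveI : IsFiniteMeasure B :=
    isFiniteMeasure_fsum _ _ (fun i => isFiniteMeasure_smul _ ENNReal.ofReal_ne_top _)
  haveI : IsFiniteMeasure C :=
    isFiniteMeasure_fsum _ _ (fun i => isFiniteMeasure_smul _ ENNReal.ofReal_ne_top _)
  have hmixac : ∀ (c : Fin k → ℝ) (ν : Fin k → Measure Y), (∀ i, ν i ≪ μ0) →
      (∑ i, ENNReal.ofReal (c i) • ν i) ≪ μ0 := by
    intro c ν hν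
    refine Measure.AbsolutelyContinuous.mk fun s hs h0 => ?_
    rw [Measure.finset_sum_apply]
    refine Finset.sum_eq_zero fun i _ => ?_
    rw [Measure.smul_apply, (hν i) h0, smul_zero]
  have hAac : A ≪ μ0 := hmixac p Q hQac
  have hBac : B ≪ μ0 := hmixac p Q' hQ'ac
  have hCac : C ≪ μ0 := hmixac p' Q' hQ'ac
  -- densities of the mixtures
  have hsd_mix : ∀ (c : Fin k → ℝ) (hc : ∀ i, 0 ≤ c i) (ν : Fin k → Measure Y)
      (hνP : ∀ i, IsProbabilityMeasure (ν i)),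
      sd (∑ i, ENNReal.ofReal (c i) • ν i) μ0
        =ᵐ[μ0] fun x => Real.sqrt (∑ i, c i * ((ν i).rnDeriv μ0 x).toReal) := by
    intro c hc ν hνP
    haveI := fun i => hνP i
    have h1 := rnDeriv_fsum Finset.univ (fun i => ENNReal.ofReal (c i) • ν i)
      (fun i => isFiniteMeasure_smul _ ENNReal.ofReal_ne_top _) μ0
    have h2 : ∀ᵐ x ∂μ0, ∀ i, (ENNReal.ofReal (c i) • ν i).rnDeriv μ0 x
        = ENNReal.ofReal (c i) * (ν i).rnDeriv μ0 x := by
      rw [ae_all_iff]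
      intro i
      filter_upwards [Measure.rnDeriv_smul_left_of_ne_top' (ν i) μ0
        (ENNReal.ofReal_ne_top (r := c i))] with x hx
      simpa using hx
    have h3 : ∀ᵐ x ∂μ0, ∀ i, (ν i).rnDeriv μ0 x < ∞ := by
      rw [ae_all_iff]
      exact fun i => Measure.rnDeriv_lt_top (ν i) μ0
    filter_upwards [h1, h2, h3] with x hx1 hx2 hx3
    rw [sd, hx1, Finset.sum_congr rfl (fun i _ => hx2 i),
      ENNReal.toReal_sum (fun i _ => ENNReal.mul_ne_top ENNReal.ofReal_ne_top (hx3 i).ne)]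
    congr 1
    refine Finset.sum_congr rfl fun i _ => ?_
    rw [ENNReal.toReal_mul, ENNReal.toReal_ofReal (hc i)]
  have hsdA := hsd_mix p hp Q hQP
  have hsdB := hsd_mix p hp Q' hQ'P
  have hsdC := hsd_mix p' hp' Q' hQ'P
  -- triangle inequality
  have htri : hellD A C ≤ hellD A B + hellD B C := by
    rw [hellD_eq_sqrt A C μ0 hAac hCac, hellD_eq_sqrt A B μ0 hAac hBac,
      hellD_eq_sqrt B C μ0 hBac hCac]
    rw [Real.sqrt_mul h12, Real.sqrt_mul h12, Real.sqrt_mul h12, ← mul_add]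
    exact mul_le_mul_of_nonneg_left
      (sqrt_integral_triangle (memℒp_sd A μ0) (memℒp_sd B μ0) (memℒp_sd C μ0))
      (Real.sqrt_nonneg _)
  -- first term
  have ht1 : hellD A B ≤ Real.sqrt (∑ i, p i * hellD (Q i) (Q' i) ^ 2) := by
    rw [hellD_eq_sqrt A B μ0 hAac hBac]
    refine Real.sqrt_le_sqrt ?_
    have hii : ∀ i : Fin k, hellD (Q i) (Q' i) ^ 2
        = (1/2) * ∫ x, (sd (Q i) μ0 x - sd (Q' i) μ0 x) ^ 2 ∂μ0 := by
      intro i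
      rw [hellD_eq_sqrt (Q i) (Q' i) μ0 (hQac i) (hQ'ac i)]
      exact Real.sq_sqrt (mul_nonneg h12 (integral_nonneg fun x => sq_nonneg _))
    have hint : ∫ x, (sd A μ0 x - sd B μ0 x) ^ 2 ∂μ0
        ≤ ∫ x, ∑ i, p i * (sd (Q i) μ0 x - sd (Q' i) μ0 x) ^ 2 ∂μ0 := by
      refine integral_mono_ae (integrable_sub_sq_sd A B μ0)
        (integrable_finset_sum _ fun i _ =>
          (integrable_sub_sq_sd (Q i) (Q' i) μ0).const_mul (p i)) ?_
      filter_upwards [hsdA, hsdB] with x hxA hxB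
      rw [hxA, hxB]
      exact key_convex p (fun i => ((Q i).rnDeriv μ0 x).toReal)
        (fun i => ((Q' i).rnDeriv μ0 x).toReal) hp
        (fun i => ENNReal.toReal_nonneg) (fun i => ENNReal.toReal_nonneg)
    have heq : (1/2) * ∫ x, ∑ i, p i * (sd (Q i) μ0 x - sd (Q' i) μ0 x) ^ 2 ∂μ0
        = ∑ i, p i * hellD (Q i) (Q' i) ^ 2 := by
      rw [integral_finset_sum Finset.univ (fun i _ =>
        (integrable_sub_sq_sd (Q i) (Q' i) μ0).const_mul (p i)), Finset.mul_sum]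
      refine Finset.sum_congr rfl fun i _ => ?_
      rw [hii i, integral_const_mul]
      ring
    calc (1/2) * ∫ x, (sd A μ0 x - sd B μ0 x) ^ 2 ∂μ0
        ≤ (1/2) * ∫ x, ∑ i, p i * (sd (Q i) μ0 x - sd (Q' i) μ0 x) ^ 2 ∂μ0 :=
          mul_le_mul_of_nonneg_left hint h12
      _ = ∑ i, p i * hellD (Q i) (Q' i) ^ 2 := heq
  -- second term
  have ht2 : hellD B C ≤ Real.sqrt ((1/2) * ∑ i, |p i - p' i|) := by
    rw [hellD_eq_sqrt B C μ0 hBac hCac]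
    refine Real.sqrt_le_sqrt ?_
    have hint : ∫ x, (sd B μ0 x - sd C μ0 x) ^ 2 ∂μ0
        ≤ ∫ x, ∑ i, |p i - p' i| * ((Q' i).rnDeriv μ0 x).toReal ∂μ0 := by
      refine integral_mono_ae (integrable_sub_sq_sd B C μ0)
        (integrable_finset_sum _ fun i _ =>
          (Measure.integrable_toReal_rnDeriv (μ := Q' i) (ν := μ0)).const_mul _) ?_
      filter_upwards [hsdB, hsdC] with x hxB hxC
      rw [hxB, hxC]
      have hs1 : (0:ℝ) ≤ ∑ i, p i * ((Q' i).rnDeriv μ0 x).toReal :=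
        Finset.sum_nonneg fun i _ => mul_nonneg (hp i) ENNReal.toReal_nonneg
      have hs2 : (0:ℝ) ≤ ∑ i, p' i * ((Q' i).rnDeriv μ0 x).toReal :=
        Finset.sum_nonneg fun i _ => mul_nonneg (hp' i) ENNReal.toReal_nonneg
      refine le_trans (sqrt_sub_sq_le_abs hs1 hs2) ?_
      rw [← Finset.sum_sub_distrib]
      refine le_trans (Finset.abs_sum_le_sum_abs _ _) ?_
      refine Finset.sum_le_sum fun i _ => ?_
      rw [← sub_mul, abs_mul, abs_of_nonneg (ENNReal.toReal_nonneg :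
        (0:ℝ) ≤ ((Q' i).rnDeriv μ0 x).toReal)]
    have heval : ∫ x, ∑ i, |p i - p' i| * ((Q' i).rnDeriv μ0 x).toReal ∂μ0
        = ∑ i, |p i - p' i| := by
      rw [integral_finset_sum Finset.univ (fun i _ =>
        (Measure.integrable_toReal_rnDeriv (μ := Q' i) (ν := μ0)).const_mul _)]
      refine Finset.sum_congr rfl fun i _ => ?_
      rw [integral_const_mul, Measure.integral_toReal_rnDeriv (hQ'ac i)]
      simp
    exact mul_le_mul_of_nonneg_left (hint.trans (le_of_eq heval)) h12
  exact htri.trans (add_le_add ht1 ht2)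


lemma hellD_nonneg {Y : Type*} [MeasurableSpace Y] (P Q : Measure Y) : 0 ≤ hellD P Q :=
  Real.sqrt_nonneg _

end HellAux
end

open HellAux

/-- Upper bound on the Hellinger distance between mixtures of `N`-fold product measures:
`h(P_{G,N}, P_{G',N}) ≤ min_τ (√N maxᵢ h(P_{θᵢ}, P_{θ'_{τ(i)}}) + √(½ ∑ᵢ |pᵢ - p'_{τ(i)}|))`. -/
theorem stmt_4 {X : Type*} [MeasurableSpace X] (q k0 N : ℕ) (hk0 : 1 ≤ k0) (hN : 1 ≤ N)
    (Θ : Set (EuclideanSpace ℝ (Fin q)))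
    (P : EuclideanSpace ℝ (Fin q) → Measure X) [∀ ϑ, IsProbabilityMeasure (P ϑ)]
    (θ θ' : Fin k0 → EuclideanSpace ℝ (Fin q))
    (hθ : ∀ i, θ i ∈ Θ) (hθ' : ∀ i, θ' i ∈ Θ)
    (hθinj : Function.Injective θ) (hθ'inj : Function.Injective θ')
    (p p' : Fin k0 → ℝ) (hp : ∀ i, 0 < p i) (hp' : ∀ i, 0 < p' i)
    (hps : ∑ i, p i = 1) (hp's : ∑ i, p' i = 1) :
    hellD (∑ i, ENNReal.ofReal (p i) • (Measure.pi fun _ : Fin N => P (θ i)))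
        (∑ i, ENNReal.ofReal (p' i) • (Measure.pi fun _ : Fin N => P (θ' i))) ≤
      ⨅ τ : Equiv.Perm (Fin k0),
        (Real.sqrt (N : ℝ) * (⨆ i, hellD (P (θ i)) (P (θ' (τ i)))) +
          Real.sqrt ((1 / 2) * ∑ i, |p i - p' (τ i)|)) := by
  refine le_ciInf fun τ => ?_
  have hre : (∑ i, ENNReal.ofReal (p' i) • (Measure.pi fun _ : Fin N => P (θ' i)))
      = ∑ i, ENNReal.ofReal (p' (τ i)) • (Measure.pi fun _ : Fin N => P (θ' (τ i))) :=
    (Equiv.sum_comp τ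
      (fun j => ENNReal.ofReal (p' j) • (Measure.pi fun _ : Fin N => P (θ' j)))).symm
  rw [hre]
  set Qf := fun i : Fin k0 => Measure.pi fun _ : Fin N => P (θ i) with hQf
  set Q'f := fun i : Fin k0 => Measure.pi fun _ : Fin N => P (θ' (τ i)) with hQ'f
  haveI : ∀ i, IsProbabilityMeasure (Qf i) := fun i => inferInstanceAs
    (IsProbabilityMeasure (Measure.pi fun _ : Fin N => P (θ i)))
  haveI : ∀ i, IsProbabilityMeasure (Q'f i) := fun i => inferInstanceAs
    (IsProbabilityMeasure (Measure.pi fun _ : Fin N => P (θ' (τ i))))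
  have hmix := hellD_mix_le Qf Q'f p (fun i => p' (τ i))
    (fun i => (hp i).le) (fun i => (hp' (τ i)).le)
  refine hmix.trans (add_le_add ?_ le_rfl)
  set M := ⨆ i, hellD (P (θ i)) (P (θ' (τ i))) with hM
  have i0 : Fin k0 := ⟨0, hk0⟩
  have hle : ∀ i, hellD (P (θ i)) (P (θ' (τ i))) ≤ M := by
    intro i
    rw [hM]
    exact le_ciSup (f := fun i => hellD (P (θ i)) (P (θ' (τ i))))
      (Set.Finite.bddAbove (Set.finite_range _)) i
  have hM0 : 0 ≤ M := le_trans (hellD_nonneg (P (θ i0)) (P (θ' (τ i0)))) (hle i0)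
  have hone : ∀ i, hellD (Qf i) (Q'f i) ≤ Real.sqrt N * M := fun i =>
    (hellD_pi_le N (P (θ i)) (P (θ' (τ i)))).trans
      (mul_le_mul_of_nonneg_left (hle i) (Real.sqrt_nonneg _))
  have hsum : ∑ i, p i * hellD (Qf i) (Q'f i) ^ 2 ≤ (Real.sqrt N * M) ^ 2 := by
    calc ∑ i, p i * hellD (Qf i) (Q'f i) ^ 2
        ≤ ∑ i, p i * (Real.sqrt N * M) ^ 2 :=
          Finset.sum_le_sum fun i _ => mul_le_mul_of_nonneg_left
            (pow_le_pow_left₀ (hellD_nonneg _ _) (hone i) 2) (hp i).le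
      _ = (Real.sqrt N * M) ^ 2 := by rw [← Finset.sum_mul, hps, one_mul]
  calc Real.sqrt (∑ i, p i * hellD (Qf i) (Q'f i) ^ 2)
      ≤ Real.sqrt ((Real.sqrt N * M) ^ 2) := Real.sqrt_le_sqrt hsum
    _ = Real.sqrt N * M := Real.sqrt_sq (mul_nonneg (Real.sqrt_nonneg _) hM0)
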